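/- (Stationarity equivalence, eq. (46) of Appendix B.) Let all square-root powers ρ⁰ = (ρ⁰_{i,t}), ρ̂⁰ = (ρ̂⁰_{i,t}) be nonnegative, and define u*_{l,k} = u^opt_{l,k}(ρ̂⁰, ρ⁰) and w*_{l,k} = 1 + SINR_{l,k}(ρ̂⁰, ρ⁰) for all l, k ∈ A_l. Fix a pair (i,t) with t ∈ A_i, and define the real functions g(x) = Σ_{l=1}^L Σ_{k∈A_l} w*_{l,k} e_{l,k}(u*_{l,k}, ρ̂⁰, ρ^x) and h(x) = Σ_{l=1}^L Σ_{k∈A_l} ln(1 + SINR_{l,k}(ρ̂⁰, ρ^x)), where ρ^x agrees with ρ⁰ in every coordinate except that the (i,t) coordinate is replaced by x. Then g and h are differentiable at x = ρ⁰_{i,t} and g′(ρ⁰_{i,t}) = −h′(ρ⁰_{i,t}). Hence the weighted-MMSE objective, with u and w fixed at their per-point optimal values, has the same first-order variation in the data square-root powers as the negative sum of ln(1 + SINR). -/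

import Mathlib

open Finset Filter

noncomputable section

lemma core_envelope (Ax Dx bx : ℝ → ℝ) (x0 : ℝ)
    (hA : Differentiable ℝ Ax) (hD : Differentiable ℝ Dx) (hb : Differentiable ℝ bx)
    (hApos : ∀ x, 0 < Ax x) (hDpos : ∀ x, 0 < Dx x)
    (hAD : ∀ x, Ax x = Dx x + bx x ^ 2) :
    ∃ d : ℝ,
      HasDerivAt (fun x => Ax x0 / Dx x0 *
          (Ax x * (bx x0 / Ax x0) ^ 2 - 2 * bx x * (bx x0 / Ax x0) + 1)) d x0 ∧
      HasDerivAt (fun x => Real.log (Ax x) - Real.log (Dx x)) (-d) x0 := by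
  have hAne : ∀ x, Ax x ≠ 0 := fun x => (hApos x).ne'
  have hDne : ∀ x, Dx x ≠ 0 := fun x => (hDpos x).ne'
  set u : ℝ := bx x0 / Ax x0 with hu
  have hφE : ∀ x, (Ax x * u ^ 2 - 2 * bx x * u + 1) - Dx x / Ax x
      = Ax x * (u - bx x / Ax x) ^ 2 := by
    intro x
    have hDx' : Dx x = Ax x - bx x ^ 2 := by have := hAD x; linarith
    rw [hDx']
    field_simp [hAne x]
    ring
  have hEdiff : Differentiable ℝ fun x => Dx x / Ax x := hD.div hA hAne
  have hφdiff : Differentiable ℝ fun x => Ax x * u ^ 2 - 2 * bx x * u + 1 :=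
    ((hA.mul_const _).sub ((hb.const_mul 2).mul_const u)).add_const 1
  have hFdiff : Differentiable ℝ fun x => (Ax x * u ^ 2 - 2 * bx x * u + 1) - Dx x / Ax x :=
    hφdiff.sub hEdiff
  have hmin : IsLocalMin (fun x => (Ax x * u ^ 2 - 2 * bx x * u + 1) - Dx x / Ax x) x0 := by
    apply Filter.Eventually.of_forall
    intro x
    have h0 : (Ax x0 * u ^ 2 - 2 * bx x0 * u + 1) - Dx x0 / Ax x0 = 0 := by
      rw [hφE x0, hu]; simp
    simp only [h0, hφE x]
    exact mul_nonneg (hApos x).le (sq_nonneg _)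
  have hF0 : deriv (fun x => (Ax x * u ^ 2 - 2 * bx x * u + 1) - Dx x / Ax x) x0 = 0 :=
    hmin.deriv_eq_zero
  have hFd : HasDerivAt (fun x => (Ax x * u ^ 2 - 2 * bx x * u + 1) - Dx x / Ax x) 0 x0 := by
    have h := (hFdiff x0).hasDerivAt
    rwa [hF0] at h
  have hEd : HasDerivAt (fun x => Dx x / Ax x)
      ((deriv Dx x0 * Ax x0 - Dx x0 * deriv Ax x0) / Ax x0 ^ 2) x0 :=
    ((hD x0).hasDerivAt).div ((hA x0).hasDerivAt) (hAne x0)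
  have hφd : HasDerivAt (fun x => Ax x * u ^ 2 - 2 * bx x * u + 1)
      (0 + (deriv Dx x0 * Ax x0 - Dx x0 * deriv Ax x0) / Ax x0 ^ 2) x0 := by
    have h := hFd.fun_add hEd
    have h2 : (fun x => ((Ax x * u ^ 2 - 2 * bx x * u + 1) - Dx x / Ax x) + Dx x / Ax x)
        = fun x => Ax x * u ^ 2 - 2 * bx x * u + 1 := by funext x; ring
    rwa [h2] at h
  refine ⟨Ax x0 / Dx x0 * (0 + (deriv Dx x0 * Ax x0 - Dx x0 * deriv Ax x0) / Ax x0 ^ 2), ?_, ?_⟩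
  · exact hφd.const_mul _
  · have hla : HasDerivAt (fun x => Real.log (Ax x)) (deriv Ax x0 / Ax x0) x0 :=
      ((hA x0).hasDerivAt).log (hAne x0)
    have hld : HasDerivAt (fun x => Real.log (Dx x)) (deriv Dx x0 / Dx x0) x0 :=
      ((hD x0).hasDerivAt).log (hDne x0)
    have h := hla.sub hld
    have heq : deriv Ax x0 / Ax x0 - deriv Dx x0 / Dx x0
        = -(Ax x0 / Dx x0 * (0 + (deriv Dx x0 * Ax x0 - Dx x0 * deriv Ax x0) / Ax x0 ^ 2)) := by
      field_simp [hAne x0, hDne x0]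
      ring
    rwa [heq] at h


/-- `Pset A k` : the set of cells in which user index `k` is active,
i.e. `P_k = {i : k ∈ A_i}`. -/
def Pset {L K : ℕ} (A : Fin L → Finset (Fin K)) (k : Fin K) : Finset (Fin L) :=
  Finset.univ.filter fun i => k ∈ A i

/-- The SINR denominator `D_{l,k}` for pilot powers `phat` and data powers `p`. -/
def Dterm {L K : ℕ} (M : ℕ) (σ2 : ℝ) (A : Fin L → Finset (Fin K))
    (β : Fin L → Fin K → Fin L → ℝ) (phat p : Fin L → Fin K → ℝ)
    (l : Fin L) (k : Fin K) : ℝ :=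
  (M : ℝ) * (K : ℝ) * ∑ i ∈ (Pset A k).erase l, p i k * phat i k * β i k l ^ 2 +
    ((K : ℝ) * ∑ i ∈ Pset A k, phat i k * β i k l + σ2) *
      ((∑ i, ∑ t ∈ A i, p i t * β i t l) + σ2)

/-- `SINR_{l,k}` for pilot powers `phat` and data powers `p`. -/
def SINR {L K : ℕ} (M : ℕ) (σ2 : ℝ) (A : Fin L → Finset (Fin K))
    (β : Fin L → Fin K → Fin L → ℝ) (phat p : Fin L → Fin K → ℝ)
    (l : Fin L) (k : Fin K) : ℝ :=
  (M : ℝ) * (K : ℝ) * p l k * phat l k * β l k l ^ 2 / Dterm M σ2 A β phat p l k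

/-- `SINR_{l,k}(ρ̂, ρ)` : the SINR evaluated at squared square-root powers. -/
def SINRsq {L K : ℕ} (M : ℕ) (σ2 : ℝ) (A : Fin L → Finset (Fin K))
    (β : Fin L → Fin K → Fin L → ℝ) (rhat rho : Fin L → Fin K → ℝ)
    (l : Fin L) (k : Fin K) : ℝ :=
  SINR M σ2 A β (fun i t => rhat i t ^ 2) (fun i t => rho i t ^ 2) l k

/-- The mean square error `e_{l,k}(u, ρ̂, ρ)`. -/
def eMSE {L K : ℕ} (M : ℕ) (σ2 : ℝ) (A : Fin L → Finset (Fin K))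
    (β : Fin L → Fin K → Fin L → ℝ) (u : ℝ) (rhat rho : Fin L → Fin K → ℝ)
    (l : Fin L) (k : Fin K) : ℝ :=
  (M : ℝ) * (K : ℝ) * u ^ 2 * ∑ i ∈ Pset A k, rho i k ^ 2 * rhat i k ^ 2 * β i k l ^ 2
    - 2 * Real.sqrt ((M : ℝ) * (K : ℝ)) * rho l k * rhat l k * u * β l k l
    + u ^ 2 * ((K : ℝ) * ∑ i ∈ Pset A k, rhat i k ^ 2 * β i k l + σ2) *
        ((∑ i, ∑ t ∈ A i, rho i t ^ 2 * β i t l) + σ2)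
    + 1

/-- The leading (quadratic in `u`) coefficient `A_{l,k}(ρ̂, ρ)` of `e_{l,k}`. -/
def Acoef {L K : ℕ} (M : ℕ) (σ2 : ℝ) (A : Fin L → Finset (Fin K))
    (β : Fin L → Fin K → Fin L → ℝ) (rhat rho : Fin L → Fin K → ℝ)
    (l : Fin L) (k : Fin K) : ℝ :=
  (M : ℝ) * (K : ℝ) * ∑ i ∈ Pset A k, rho i k ^ 2 * rhat i k ^ 2 * β i k l ^ 2 +
    ((K : ℝ) * ∑ i ∈ Pset A k, rhat i k ^ 2 * β i k l + σ2) *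
      ((∑ i, ∑ t ∈ A i, rho i t ^ 2 * β i t l) + σ2)

/-- The optimal beamforming coefficient `u^opt_{l,k}(ρ̂, ρ)`. -/
def uopt {L K : ℕ} (M : ℕ) (σ2 : ℝ) (A : Fin L → Finset (Fin K))
    (β : Fin L → Fin K → Fin L → ℝ) (rhat rho : Fin L → Fin K → ℝ)
    (l : Fin L) (k : Fin K) : ℝ :=
  Real.sqrt ((M : ℝ) * (K : ℝ)) * rho l k * rhat l k * β l k l /
    Acoef M σ2 A β rhat rho l k

/-- The weighted-MMSE objective `F(u, w, ρ̂, ρ)`. -/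
def Fobj {L K : ℕ} (M : ℕ) (σ2 : ℝ) (A : Fin L → Finset (Fin K))
    (β : Fin L → Fin K → Fin L → ℝ) (u w rhat rho : Fin L → Fin K → ℝ) : ℝ :=
  ∑ l, ∑ k ∈ A l, (w l k * eMSE M σ2 A β (u l k) rhat rho l k - Real.log (w l k))

/-- The pilot-power quadratic coefficient `η̂_{l,k}(u, w, ρ)`. -/
def etaHat {L K : ℕ} (M : ℕ) (σ2 : ℝ) (A : Fin L → Finset (Fin K))
    (β : Fin L → Fin K → Fin L → ℝ) (u w rho : Fin L → Fin K → ℝ)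
    (l : Fin L) (k : Fin K) : ℝ :=
  rho l k ^ 2 * (M : ℝ) * (K : ℝ) * ∑ i ∈ Pset A k, w i k * u i k ^ 2 * β l k i ^ 2 +
    (K : ℝ) * ∑ j ∈ Pset A k, w j k * u j k ^ 2 * β l k j *
      ((∑ i, ∑ t ∈ A i, rho i t ^ 2 * β i t j) + σ2)

/-- The data-power quadratic coefficient `η_{l,k}(u, w, ρ̂)`. -/
def etaData {L K : ℕ} (M : ℕ) (σ2 : ℝ) (A : Fin L → Finset (Fin K))
    (β : Fin L → Fin K → Fin L → ℝ) (u w rhat : Fin L → Fin K → ℝ)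
    (l : Fin L) (k : Fin K) : ℝ :=
  rhat l k ^ 2 * (M : ℝ) * (K : ℝ) * ∑ i ∈ Pset A k, w i k * u i k ^ 2 * β l k i ^ 2 +
    ∑ i, ∑ t ∈ A i, w i t * u i t ^ 2 * β l k i *
      ((K : ℝ) * ∑ j ∈ Pset A t, rhat j t ^ 2 * β j t i + σ2)

/-- stationarity equivalence, eq. (46): with `u*` and `w*` fixed at
their per-point optimal values `u*_{l,k} = u^opt_{l,k}(ρ̂⁰,ρ⁰)`,
`w*_{l,k} = 1 + SINR_{l,k}(ρ̂⁰,ρ⁰)`, the weighted-MMSE objective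
`g(x) = Σ w*_{l,k} e_{l,k}(u*_{l,k}, ρ̂⁰, ρ^x)` and
`h(x) = Σ ln(1 + SINR_{l,k}(ρ̂⁰, ρ^x))`, where `ρ^x` replaces the `(i,t)` data
square-root power by `x`, are differentiable at `x = ρ⁰_{i,t}` with
`g′(ρ⁰_{i,t}) = −h′(ρ⁰_{i,t})`. -/
theorem stmt14 {L K : ℕ} (M : ℕ) (hL : 0 < L) (hK : 0 < K) (hM : 0 < M)
    (σ2 : ℝ) (hσ : 0 < σ2)
    (A : Fin L → Finset (Fin K))
    (β : Fin L → Fin K → Fin L → ℝ) (hβ : ∀ i t l, 0 ≤ β i t l)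
    (rhat0 rho0 : Fin L → Fin K → ℝ)
    (hrhat0 : ∀ i t, 0 ≤ rhat0 i t) (hrho0 : ∀ i t, 0 ≤ rho0 i t)
    (i : Fin L) (t : Fin K) (ht : t ∈ A i) :
    let ustar : Fin L → Fin K → ℝ := fun l k => uopt M σ2 A β rhat0 rho0 l k
    let wstar : Fin L → Fin K → ℝ := fun l k => 1 + SINRsq M σ2 A β rhat0 rho0 l k
    let rhoX : ℝ → Fin L → Fin K → ℝ := fun x i' t' =>
      if i' = i ∧ t' = t then x else rho0 i' t'
    let g : ℝ → ℝ := fun x =>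
      ∑ l, ∑ k ∈ A l, wstar l k * eMSE M σ2 A β (ustar l k) rhat0 (rhoX x) l k
    let h : ℝ → ℝ := fun x =>
      ∑ l, ∑ k ∈ A l, Real.log (1 + SINRsq M σ2 A β rhat0 (rhoX x) l k)
    ∃ d : ℝ, HasDerivAt g d (rho0 i t) ∧ HasDerivAt h (-d) (rho0 i t) := by
  intro ustar wstar rhoX g h
  have hrhoX : ∀ x a b, rhoX x a b = if a = i ∧ b = t then x else rho0 a b := fun _ _ _ => rfl
  have hustar : ∀ l k, ustar l k = uopt M σ2 A β rhat0 rho0 l k := fun _ _ => rfl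
  have hwstar : ∀ l k, wstar l k = 1 + SINRsq M σ2 A β rhat0 rho0 l k := fun _ _ => rfl
  have hrhoX0 : rhoX (rho0 i t) = rho0 := by
    funext a b
    rw [hrhoX]
    by_cases hc : a = i ∧ b = t
    · rw [if_pos hc, hc.1, hc.2]
    · rw [if_neg hc]
  have hcoord : ∀ a b, Differentiable ℝ (fun x => rhoX x a b) := by
    intro a b
    by_cases hc : a = i ∧ b = t
    · have he : (fun x => rhoX x a b) = fun x => x := by
        funext x; rw [hrhoX, if_pos hc]
      rw [he]; exact differentiable_id
    · have he : (fun x => rhoX x a b) = fun _ => rho0 a b := by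
        funext x; rw [hrhoX, if_neg hc]
      rw [he]; exact differentiable_const _
  have hsq : ∀ a b, Differentiable ℝ (fun x => rhoX x a b ^ 2) :=
    fun a b => (hcoord a b).pow 2
  have key : ∀ l k, k ∈ A l → ∃ d : ℝ,
      HasDerivAt (fun x => wstar l k * eMSE M σ2 A β (ustar l k) rhat0 (rhoX x) l k)
        d (rho0 i t) ∧
      HasDerivAt (fun x => Real.log (1 + SINRsq M σ2 A β rhat0 (rhoX x) l k))
        (-d) (rho0 i t) := by
    intro l k hk
    have hlP : l ∈ Pset A k := by simp [Pset, hk]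
    -- positivity
    have hApos : ∀ x, 0 < Acoef M σ2 A β rhat0 (rhoX x) l k := by
      intro x
      simp only [Acoef]
      have h1 : 0 ≤ ∑ a ∈ Pset A k, rhoX x a k ^ 2 * rhat0 a k ^ 2 * β a k l ^ 2 :=
        Finset.sum_nonneg fun a _ => by positivity
      have h2 : 0 ≤ ∑ a ∈ Pset A k, rhat0 a k ^ 2 * β a k l :=
        Finset.sum_nonneg fun a _ => mul_nonneg (sq_nonneg _) (hβ _ _ _)
      have h3 : 0 ≤ ∑ a, ∑ b ∈ A a, rhoX x a b ^ 2 * β a b l :=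
        Finset.sum_nonneg fun a _ => Finset.sum_nonneg fun b _ =>
          mul_nonneg (sq_nonneg _) (hβ _ _ _)
      have hMK : (0:ℝ) ≤ (M:ℝ) * (K:ℝ) := by positivity
      have h4 : 0 < (K:ℝ) * ∑ a ∈ Pset A k, rhat0 a k ^ 2 * β a k l + σ2 := by
        have := mul_nonneg (Nat.cast_nonneg (α := ℝ) K) h2
        linarith
      have h5 : 0 < (∑ a, ∑ b ∈ A a, rhoX x a b ^ 2 * β a b l) + σ2 := by linarith
      have h6 := mul_pos h4 h5
      nlinarith [mul_nonneg hMK h1]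
    have hDpos : ∀ x, 0 < Dterm M σ2 A β (fun a b => rhat0 a b ^ 2)
        (fun a b => rhoX x a b ^ 2) l k := by
      intro x
      simp only [Dterm]
      have h1 : 0 ≤ ∑ a ∈ (Pset A k).erase l, rhoX x a k ^ 2 * rhat0 a k ^ 2 * β a k l ^ 2 :=
        Finset.sum_nonneg fun a _ => by positivity
      have h2 : 0 ≤ ∑ a ∈ Pset A k, rhat0 a k ^ 2 * β a k l :=
        Finset.sum_nonneg fun a _ => mul_nonneg (sq_nonneg _) (hβ _ _ _)
      have h3 : 0 ≤ ∑ a, ∑ b ∈ A a, rhoX x a b ^ 2 * β a b l :=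
        Finset.sum_nonneg fun a _ => Finset.sum_nonneg fun b _ =>
          mul_nonneg (sq_nonneg _) (hβ _ _ _)
      have hMK : (0:ℝ) ≤ (M:ℝ) * (K:ℝ) := by positivity
      have h4 : 0 < (K:ℝ) * ∑ a ∈ Pset A k, rhat0 a k ^ 2 * β a k l + σ2 := by
        have := mul_nonneg (Nat.cast_nonneg (α := ℝ) K) h2
        linarith
      have h5 : 0 < (∑ a, ∑ b ∈ A a, rhoX x a b ^ 2 * β a b l) + σ2 := by linarith
      have h6 := mul_pos h4 h5
      nlinarith [mul_nonneg hMK h1]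
    -- algebraic identities
    have hb2 : ∀ x, (Real.sqrt ((M:ℝ) * (K:ℝ)) * rhoX x l k * rhat0 l k * β l k l) ^ 2
        = (M:ℝ) * (K:ℝ) * rhoX x l k ^ 2 * rhat0 l k ^ 2 * β l k l ^ 2 := by
      intro x
      have hs : Real.sqrt ((M:ℝ) * (K:ℝ)) ^ 2 = (M:ℝ) * (K:ℝ) :=
        Real.sq_sqrt (by positivity)
      rw [mul_pow, mul_pow, mul_pow, hs]
    have hAD : ∀ x, Acoef M σ2 A β rhat0 (rhoX x) l k
        = Dterm M σ2 A β (fun a b => rhat0 a b ^ 2) (fun a b => rhoX x a b ^ 2) l k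
          + (Real.sqrt ((M:ℝ) * (K:ℝ)) * rhoX x l k * rhat0 l k * β l k l) ^ 2 := by
      intro x
      rw [hb2 x]
      simp only [Acoef, Dterm]
      rw [← Finset.sum_erase_add (Pset A k) _ hlP]
      beta_reduce
      ring
    have heMSE : ∀ u x, eMSE M σ2 A β u rhat0 (rhoX x) l k
        = Acoef M σ2 A β rhat0 (rhoX x) l k * u ^ 2
          - 2 * (Real.sqrt ((M:ℝ) * (K:ℝ)) * rhoX x l k * rhat0 l k * β l k l) * u + 1 := by
      intro u x
      simp only [eMSE, Acoef]
      ring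
    have hquot : ∀ x, 1 + SINRsq M σ2 A β rhat0 (rhoX x) l k
        = Acoef M σ2 A β rhat0 (rhoX x) l k /
          Dterm M σ2 A β (fun a b => rhat0 a b ^ 2) (fun a b => rhoX x a b ^ 2) l k := by
      intro x
      simp only [SINRsq, SINR]
      rw [hAD x, hb2 x]
      field_simp [(hDpos x).ne']
    have hlog : ∀ x, Real.log (1 + SINRsq M σ2 A β rhat0 (rhoX x) l k)
        = Real.log (Acoef M σ2 A β rhat0 (rhoX x) l k)
          - Real.log (Dterm M σ2 A β (fun a b => rhat0 a b ^ 2)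
              (fun a b => rhoX x a b ^ 2) l k) := by
      intro x
      rw [hquot x, Real.log_div (hApos x).ne' (hDpos x).ne']
    -- differentiability
    have hAdiff : Differentiable ℝ (fun x => Acoef M σ2 A β rhat0 (rhoX x) l k) := by
      simp only [Acoef]
      apply Differentiable.add
      · exact (Differentiable.fun_sum fun a _ => ((hsq a k).mul_const _).mul_const _).const_mul _
      · exact ((Differentiable.fun_sum fun a _ => Differentiable.fun_sum fun b _ =>
          (hsq a b).mul_const _).add_const _).const_mul _
    have hDdiff : Differentiable ℝ (fun x => Dterm M σ2 A β (fun a b => rhat0 a b ^ 2)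
        (fun a b => rhoX x a b ^ 2) l k) := by
      simp only [Dterm]
      apply Differentiable.add
      · exact (Differentiable.fun_sum fun a _ => ((hsq a k).mul_const _).mul_const _).const_mul _
      · exact ((Differentiable.fun_sum fun a _ => Differentiable.fun_sum fun b _ =>
          (hsq a b).mul_const _).add_const _).const_mul _
    have hbdiff : Differentiable ℝ
        (fun x => Real.sqrt ((M:ℝ) * (K:ℝ)) * rhoX x l k * rhat0 l k * β l k l) :=
      (((hcoord l k).const_mul _).mul_const _).mul_const _
    obtain ⟨d, hgd, hhd⟩ := core_envelope
      (fun x => Acoef M σ2 A β rhat0 (rhoX x) l k)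
      (fun x => Dterm M σ2 A β (fun a b => rhat0 a b ^ 2) (fun a b => rhoX x a b ^ 2) l k)
      (fun x => Real.sqrt ((M:ℝ) * (K:ℝ)) * rhoX x l k * rhat0 l k * β l k l)
      (rho0 i t) hAdiff hDdiff hbdiff hApos hDpos hAD
    -- identify values at the base point
    have hu' : ustar l k = Real.sqrt ((M:ℝ) * (K:ℝ)) * rhoX (rho0 i t) l k * rhat0 l k *
        β l k l / Acoef M σ2 A β rhat0 (rhoX (rho0 i t)) l k := by
      rw [hustar, hrhoX0]
      rfl
    have hw : wstar l k = Acoef M σ2 A β rhat0 (rhoX (rho0 i t)) l k /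
        Dterm M σ2 A β (fun a b => rhat0 a b ^ 2)
          (fun a b => rhoX (rho0 i t) a b ^ 2) l k := by
      have hq := hquot (rho0 i t)
      rw [hwstar, hrhoX0]
      rw [hrhoX0] at hq
      exact hq
    refine ⟨d, ?_, ?_⟩
    · have hfun : (fun x => wstar l k * eMSE M σ2 A β (ustar l k) rhat0 (rhoX x) l k)
          = fun x => Acoef M σ2 A β rhat0 (rhoX (rho0 i t)) l k /
              Dterm M σ2 A β (fun a b => rhat0 a b ^ 2)
                (fun a b => rhoX (rho0 i t) a b ^ 2) l k *
              (Acoef M σ2 A β rhat0 (rhoX x) l k *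
                  (Real.sqrt ((M:ℝ) * (K:ℝ)) * rhoX (rho0 i t) l k * rhat0 l k * β l k l /
                    Acoef M σ2 A β rhat0 (rhoX (rho0 i t)) l k) ^ 2
                - 2 * (Real.sqrt ((M:ℝ) * (K:ℝ)) * rhoX x l k * rhat0 l k * β l k l) *
                  (Real.sqrt ((M:ℝ) * (K:ℝ)) * rhoX (rho0 i t) l k * rhat0 l k * β l k l /
                    Acoef M σ2 A β rhat0 (rhoX (rho0 i t)) l k) + 1) := by
        funext x
        rw [heMSE (ustar l k) x, hw, hu']
      rw [hfun]
      exact hgd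
    · have hfun2 : (fun x => Real.log (1 + SINRsq M σ2 A β rhat0 (rhoX x) l k))
          = fun x => Real.log (Acoef M σ2 A β rhat0 (rhoX x) l k)
              - Real.log (Dterm M σ2 A β (fun a b => rhat0 a b ^ 2)
                  (fun a b => rhoX x a b ^ 2) l k) := by
        funext x
        exact hlog x
      rw [hfun2]
      exact hhd
  choose! d hd1 hd2 using key
  refine ⟨∑ l, ∑ k ∈ A l, d l k, ?_, ?_⟩
  · show HasDerivAt (fun x => ∑ l, ∑ k ∈ A l,
        wstar l k * eMSE M σ2 A β (ustar l k) rhat0 (rhoX x) l k)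
      (∑ l, ∑ k ∈ A l, d l k) (rho0 i t)
    exact HasDerivAt.fun_sum fun l _ => HasDerivAt.fun_sum fun k hk => hd1 l k hk
  · show HasDerivAt (fun x => ∑ l, ∑ k ∈ A l,
        Real.log (1 + SINRsq M σ2 A β rhat0 (rhoX x) l k))
      (-∑ l, ∑ k ∈ A l, d l k) (rho0 i t)
    have H := HasDerivAt.fun_sum (fun l (_ : l ∈ (Finset.univ : Finset (Fin L))) =>
      HasDerivAt.fun_sum fun k hk => hd2 l k hk)
    have hval : (∑ l, ∑ k ∈ A l, -(d l k)) = -∑ l, ∑ k ∈ A l, d l k := by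
      simp
    rwa [hval] at H
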